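/- arXiv:hep-th/0406078 — 2 statements merged into one kernel-verified Lean document; each statement's English description precedes it below -/
import Mathlib

section
/- If a polynomial P in variables (A, B, B₂, B₃) (with parameter X) satisfies the first-order PDE [−2∂/∂A + ∂/∂B + (A+1+2B)∂/∂B₂ + ((B+5X)(1+A+2B) − B₂ − 10X)∂/∂B₃] P = 0, then after the change of variables u = B, v₁ = A+1+2B, v₂ = B₂ − B(A+1+2B), v₃ = B₃ − B(B(1+A+2B) − B₂ + 5X(1+A+2B) − 10X), the function P expressed in (u, v₁, v₂, v₃, X) satisfies ∂P/∂u = 0; i.e., P depends only on v₁, v₂, v₃, X. -/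
/-- If a differentiable function `P` of `(A, B, B₂, B₃)` (with parameter `X`) satisfies the
first-order PDE
`[−2∂_A + ∂_B + (A+1+2B)∂_{B₂} + ((B+5X)(1+A+2B) − B₂ − 10X)∂_{B₃}] P = 0`,
then, after the change of variables `u = B`, `v₁ = A+1+2B`, `v₂ = B₂ − B(A+1+2B)`,
`v₃ = B₃ − B(B(1+A+2B) − B₂ + 5X(1+A+2B) − 10X)`, the function `P` expressed in
`(u, v₁, v₂, v₃)` satisfies `∂P/∂u = 0`. -/
theorem pde_implies_u_independent (X : ℝ) (P : ℝ × ℝ × ℝ × ℝ → ℝ)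
    (hP : Differentiable ℝ P)
    (hPDE : ∀ A B B2 B3 : ℝ,
      -2 * fderiv ℝ P (A, B, B2, B3) (1, 0, 0, 0)
        + fderiv ℝ P (A, B, B2, B3) (0, 1, 0, 0)
        + (A + 1 + 2 * B) * fderiv ℝ P (A, B, B2, B3) (0, 0, 1, 0)
        + ((B + 5 * X) * (1 + A + 2 * B) - B2 - 10 * X)
            * fderiv ℝ P (A, B, B2, B3) (0, 0, 0, 1) = 0) :
    ∀ u v1 v2 v3 : ℝ,
      deriv (fun u : ℝ =>
        P (v1 - 1 - 2 * u, u, v2 + u * v1, v3 + u * (-v2 + 5 * X * (v1 - 2)))) u = 0 := by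
  intro u v1 v2 v3
  set d : ℝ := -v2 + 5 * X * (v1 - 2) with hd
  -- the curve
  have h1 : HasDerivAt (fun u : ℝ => v1 - 1 - 2 * u) (-2) u := by
    simpa using ((hasDerivAt_id u).const_mul 2).const_sub (v1 - 1)
  have h2 : HasDerivAt (fun u : ℝ => u) 1 u := hasDerivAt_id u
  have h3 : HasDerivAt (fun u : ℝ => v2 + u * v1) v1 u := by
    simpa using ((hasDerivAt_id u).mul_const v1).const_add v2
  have h4 : HasDerivAt (fun u : ℝ => v3 + u * d) d u := by
    simpa using ((hasDerivAt_id u).mul_const d).const_add v3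
  have hg : HasDerivAt
      (fun u : ℝ => ((v1 - 1 - 2 * u, u, v2 + u * v1, v3 + u * d) : ℝ × ℝ × ℝ × ℝ))
      ((-2, 1, v1, d) : ℝ × ℝ × ℝ × ℝ) u := h1.prodMk (h2.prodMk (h3.prodMk h4))
  set pt : ℝ × ℝ × ℝ × ℝ := (v1 - 1 - 2 * u, u, v2 + u * v1, v3 + u * d) with hpt
  have hcomp : HasDerivAt
      (fun u : ℝ => P (v1 - 1 - 2 * u, u, v2 + u * v1, v3 + u * d))
      ((fderiv ℝ P pt) ((-2, 1, v1, d) : ℝ × ℝ × ℝ × ℝ)) u :=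
    ((hP pt).hasFDerivAt).comp_hasDerivAt u hg
  rw [hcomp.deriv]
  set L := fderiv ℝ P pt with hL
  have hdecomp : ((-2, 1, v1, d) : ℝ × ℝ × ℝ × ℝ) =
      (-2 : ℝ) • (1, 0, 0, 0) + (1 : ℝ) • (0, 1, 0, 0)
        + v1 • (0, 0, 1, 0) + d • (0, 0, 0, 1) := by
    simp [Prod.ext_iff]
  rw [hdecomp, map_add, map_add, map_add, map_smul, map_smul, map_smul, map_smul,
    smul_eq_mul, smul_eq_mul, smul_eq_mul, smul_eq_mul]
  have key := hPDE (v1 - 1 - 2 * u) u (v2 + u * v1) (v3 + u * d)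
  have hA : v1 - 1 - 2 * u + 1 + 2 * u = v1 := by ring
  have hB : (u + 5 * X) * (1 + (v1 - 1 - 2 * u) + 2 * u) - (v2 + u * v1) - 10 * X = d := by
    rw [hd]; ring
  rw [hA, hB] at key
  linarith
end

section
/- Suppose P is a polynomial in A, B, B₂, B₃, X of weighted degree at most n (with weights deg A = deg B = deg X = 1, deg B₂ = 2, deg B₃ = 3), and suppose the derivation D defined by D(A) = A₂ − A², D(B) = B₂ − B², D(B₂) = B₃ − B B₂, D(B₃) = B₄ − B B₃, D(X) = 5X(X−1), with A₂ and B₄ replaced via the relations A₂ = −4B₂ − 2AB − 2B + 2B² − 2A + 10XB + 5XA − 5X − 1 and B₄ = 10X B₃ − 35X B₂ + 50X B − 24X. Then D(P) is a polynomial in A, B, B₂, B₃, X of weighted degree at most n + 1. -/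
open MvPolynomial Finsupp

namespace QuinticAux

variable {σ : Type*} {w : σ → ℕ}

lemma wtd_le_iff {p : MvPolynomial σ ℚ} {n : ℕ} :
    weightedTotalDegree w p ≤ n ↔ ∀ d ∈ p.support, weight w d ≤ n :=
  Finset.sup_le_iff

lemma wtd_C (r : ℚ) (n : ℕ) : weightedTotalDegree w (C r : MvPolynomial σ ℚ) ≤ n := by
  classical
  rw [wtd_le_iff]
  intro d hd
  rw [MvPolynomial.mem_support_iff, coeff_C] at hd
  rcases eq_or_ne (0 : σ →₀ ℕ) d with h | h
  · simp [← h]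
  · simp [h] at hd

lemma wtd_one (n : ℕ) : weightedTotalDegree w (1 : MvPolynomial σ ℚ) ≤ n := by
  rw [← C_1]; exact wtd_C 1 n

lemma wtd_ofNat (k : ℕ) [k.AtLeastTwo] (n : ℕ) :
    weightedTotalDegree w (OfNat.ofNat k : MvPolynomial σ ℚ) ≤ n := by
  rw [← map_ofNat (C : ℚ →+* MvPolynomial σ ℚ) k]
  exact wtd_C _ n

lemma wtd_X (i : σ) : weightedTotalDegree w (X i : MvPolynomial σ ℚ) ≤ w i := by
  classical
  rw [wtd_le_iff]
  intro d hd
  rw [MvPolynomial.mem_support_iff, coeff_X'] at hd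
  rcases eq_or_ne (Finsupp.single i 1) d with h | h
  · rw [← h]
    simp [Finsupp.weight_apply, Finsupp.sum_single_index]
  · simp [h] at hd

lemma wtd_add {p q : MvPolynomial σ ℚ} {n : ℕ}
    (hp : weightedTotalDegree w p ≤ n) (hq : weightedTotalDegree w q ≤ n) :
    weightedTotalDegree w (p + q) ≤ n := by
  classical
  rw [wtd_le_iff] at *
  intro d hd
  rcases Finset.mem_union.1 (MvPolynomial.support_add hd) with h | h
  exacts [hp d h, hq d h]

lemma wtd_neg {p : MvPolynomial σ ℚ} {n : ℕ}
    (hp : weightedTotalDegree w p ≤ n) : weightedTotalDegree w (-p) ≤ n := by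
  rw [wtd_le_iff] at *
  intro d hd
  exact hp d (by simpa using hd)

lemma wtd_sub {p q : MvPolynomial σ ℚ} {n : ℕ}
    (hp : weightedTotalDegree w p ≤ n) (hq : weightedTotalDegree w q ≤ n) :
    weightedTotalDegree w (p - q) ≤ n := by
  rw [sub_eq_add_neg]; exact wtd_add hp (wtd_neg hq)

lemma wtd_mul {p q : MvPolynomial σ ℚ} {m n : ℕ}
    (hp : weightedTotalDegree w p ≤ m) (hq : weightedTotalDegree w q ≤ n) :
    weightedTotalDegree w (p * q) ≤ m + n := by
  classical
  rw [wtd_le_iff] at *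
  intro d hd
  obtain ⟨a, ha, b, hb, rfl⟩ := Finset.mem_add.1 (MvPolynomial.support_mul p q hd)
  rw [map_add]
  exact add_le_add (hp a ha) (hq b hb)

lemma wtd_pow {p : MvPolynomial σ ℚ} {m : ℕ} (k : ℕ)
    (hp : weightedTotalDegree w p ≤ m) : weightedTotalDegree w (p ^ k) ≤ k * m := by
  induction k with
  | zero => simpa using wtd_one 0
  | succ k ih =>
    rw [pow_succ, Nat.succ_mul]
    exact wtd_mul ih hp

lemma wtd_smul (c : ℚ) {p : MvPolynomial σ ℚ} {n : ℕ}
    (hp : weightedTotalDegree w p ≤ n) : weightedTotalDegree w (c • p) ≤ n := by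
  rw [wtd_le_iff] at *
  exact fun d hd => hp d (MvPolynomial.support_smul hd)

lemma wtd_monomial (s : σ →₀ ℕ) (r : ℚ) :
    weightedTotalDegree w (monomial s r : MvPolynomial σ ℚ) ≤ weight w s := by
  rw [wtd_le_iff]
  intro d hd
  rcases MvPolynomial.support_monomial_subset hd with h
  simp_all

lemma wtd_sum {α : Type*} (s : Finset α) (f : α → MvPolynomial σ ℚ) {n : ℕ}
    (h : ∀ a ∈ s, weightedTotalDegree w (f a) ≤ n) :
    weightedTotalDegree w (∑ a ∈ s, f a) ≤ n := by
  classical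
  induction s using Finset.induction_on with
  | empty => simp [weightedTotalDegree]
  | insert x s hx ih =>
    rw [Finset.sum_insert hx]
    exact wtd_add (h _ (Finset.mem_insert_self _ _))
      (ih fun a ha => h a (Finset.mem_insert_of_mem ha))

lemma wtd_mkDerivation_monomial (f : σ → MvPolynomial σ ℚ)
    (hf : ∀ i, weightedTotalDegree w (f i) ≤ w i + 1) (s : σ →₀ ℕ) (r : ℚ) :
    weightedTotalDegree w (mkDerivation ℚ f (monomial s r)) ≤ weight w s + 1 := by
  rw [mkDerivation_monomial]
  apply wtd_smul
  rw [Finsupp.sum]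
  apply wtd_sum
  intro i hi
  have hsingle : Finsupp.single i 1 ≤ s := by
    rw [Finsupp.single_le_iff]
    exact Nat.one_le_iff_ne_zero.2 (Finsupp.mem_support_iff.1 hi)
  have hkey : weight w (s - Finsupp.single i 1) + w i = weight w s := by
    conv_rhs => rw [← tsub_add_cancel_of_le hsingle]
    rw [map_add]
    congr 1
    simp [Finsupp.weight_apply, Finsupp.sum_single_index]
  calc weightedTotalDegree w ((monomial (s - Finsupp.single i 1) ((s i : ℚ))) • f i)
      ≤ weight w (s - Finsupp.single i 1) + (w i + 1) := by
        rw [smul_eq_mul]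
        exact wtd_mul (wtd_monomial _ _) (hf i)
    _ = weight w s + 1 := by rw [← add_assoc, hkey]

lemma wtd_mkDerivation (f : σ → MvPolynomial σ ℚ)
    (hf : ∀ i, weightedTotalDegree w (f i) ≤ w i + 1) {n : ℕ} {P : MvPolynomial σ ℚ}
    (hP : weightedTotalDegree w P ≤ n) :
    weightedTotalDegree w (mkDerivation ℚ f P) ≤ n + 1 := by
  have : (mkDerivation ℚ f) P
      = ∑ d ∈ P.support, (mkDerivation ℚ f) (monomial d (coeff d P)) := by
    conv_lhs => rw [P.as_sum]
    exact map_sum _ _ _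
  rw [this]
  apply wtd_sum
  intro d hd
  refine le_trans (wtd_mkDerivation_monomial f hf d _) ?_
  exact Nat.add_le_add_right (le_trans (le_weightedTotalDegree w hd) hP) 1

end QuinticAux

/-- The derivation `D` modeling `ψ∂_ψ` on `ℚ[A, B, B₂, B₃, X]` (variables indexed
`0 = A, 1 = B, 2 = B₂, 3 = B₃, 4 = X`), with
`D(A) = A₂ − A²`, `D(B) = B₂ − B²`, `D(B₂) = B₃ − B·B₂`, `D(B₃) = B₄ − B·B₃`,
`D(X) = 5X(X−1)`, where `A₂` and `B₄` are replaced via the relations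
`A₂ = −4B₂ − 2AB − 2B + 2B² − 2A + 10XB + 5XA − 5X − 1` and
`B₄ = 10X B₃ − 35X B₂ + 50X B − 24X`. -/
noncomputable def quinticDerivation :
    Derivation ℚ (MvPolynomial (Fin 5) ℚ) (MvPolynomial (Fin 5) ℚ) :=
  MvPolynomial.mkDerivation ℚ
    ![(-4 * X 2 - 2 * X 0 * X 1 - 2 * X 1 + 2 * X 1 ^ 2 - 2 * X 0
        + 10 * X 4 * X 1 + 5 * X 4 * X 0 - 5 * X 4 - 1) - X 0 ^ 2,
      X 2 - X 1 ^ 2,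
      X 3 - X 1 * X 2,
      (10 * X 4 * X 3 - 35 * X 4 * X 2 + 50 * X 4 * X 1 - 24 * X 4) - X 1 * X 3,
      5 * X 4 * (X 4 - 1)]

/-- The derivation `D` raises the weighted degree (weights
`deg A = deg B = deg X = 1`, `deg B₂ = 2`, `deg B₃ = 3`) by at most one: if `P` has
weighted degree at most `n`, then `D(P)` has weighted degree at most `n + 1`. -/
theorem quinticDerivation_weighted_degree (n : ℕ) (P : MvPolynomial (Fin 5) ℚ)
    (hP : weightedTotalDegree (![1, 1, 2, 3, 1] : Fin 5 → ℕ) P ≤ n) :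
    weightedTotalDegree (![1, 1, 2, 3, 1] : Fin 5 → ℕ) (quinticDerivation P) ≤ n + 1 := by
  open QuinticAux in
  refine QuinticAux.wtd_mkDerivation _ ?_ hP
  intro i
  have hX : ∀ j : Fin 5, weightedTotalDegree (![1, 1, 2, 3, 1] : Fin 5 → ℕ)
      (X j : MvPolynomial (Fin 5) ℚ) ≤ ![1, 1, 2, 3, 1] j := fun j => wtd_X j
  fin_cases i <;>
    simp only [Matrix.cons_val_zero, Matrix.cons_val_one, Matrix.head_cons,
      Matrix.cons_val_two, Matrix.tail_cons, Matrix.cons_val_three, Matrix.cons_val_four,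
      Matrix.head_fin_const, Fin.isValue, Matrix.cons_val_fin_one]
  · refine wtd_sub (wtd_sub (wtd_sub (wtd_add (wtd_add (wtd_sub (wtd_add (wtd_sub
        (wtd_sub ?_ ?_) ?_) ?_) ?_) ?_) ?_) ?_) ?_) ?_
    · exact le_trans (wtd_mul (wtd_neg (wtd_ofNat 4 0)) (hX 2)) (by decide)
    · exact le_trans (wtd_mul (wtd_mul (wtd_ofNat 2 0) (hX 0)) (hX 1)) (by decide)
    · exact le_trans (wtd_mul (wtd_ofNat 2 0) (hX 1)) (by decide)
    · exact le_trans (wtd_mul (wtd_ofNat 2 0) (wtd_pow 2 (hX 1))) (by decide)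
    · exact le_trans (wtd_mul (wtd_ofNat 2 0) (hX 0)) (by decide)
    · exact le_trans (wtd_mul (wtd_mul (wtd_ofNat 10 0) (hX 4)) (hX 1)) (by decide)
    · exact le_trans (wtd_mul (wtd_mul (wtd_ofNat 5 0) (hX 4)) (hX 0)) (by decide)
    · exact le_trans (wtd_mul (wtd_ofNat 5 0) (hX 4)) (by decide)
    · exact wtd_one _
    · exact le_trans (wtd_pow 2 (hX 0)) (by decide)
  · exact wtd_sub (le_trans (hX 2) (by decide)) (le_trans (wtd_pow 2 (hX 1)) (by decide))
  · exact wtd_sub (le_trans (hX 3) (by decide))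
      (le_trans (wtd_mul (hX 1) (hX 2)) (by decide))
  · refine wtd_sub (wtd_sub (wtd_add (wtd_sub ?_ ?_) ?_) ?_) ?_
    · exact le_trans (wtd_mul (wtd_mul (wtd_ofNat 10 0) (hX 4)) (hX 3)) (by decide)
    · exact le_trans (wtd_mul (wtd_mul (wtd_ofNat 35 0) (hX 4)) (hX 2)) (by decide)
    · exact le_trans (wtd_mul (wtd_mul (wtd_ofNat 50 0) (hX 4)) (hX 1)) (by decide)
    · exact le_trans (wtd_mul (wtd_ofNat 24 0) (hX 4)) (by decide)
    · exact le_trans (wtd_mul (hX 1) (hX 3)) (by decide)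
  · exact le_trans (wtd_mul (wtd_mul (wtd_ofNat 5 0) (hX 4))
      (wtd_sub (hX 4) (wtd_one _))) (by decide)
end
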